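/- Let h, h̲ ∈ W^{1,∞}(0,L) with 0 ≤ h̲ ≤ h ≤ M, m(x) = (h(x)+1)/(h̲(x)+1), and w ∈ H¹(F_h⁻;ℝ²) where F_h⁻ = {(x,y) : 0<x<L, −1<y<h(x)}. Then the vertical-translation difference satisfies ‖w(·, m(·)(·+1)−1) − w‖_{L²(F_{h̲})}² ≤ (M+1) ‖m−1‖_{L^∞(0,L)} ‖h̲‖_{L^∞(0,L)} ‖∇w‖_{L²(F_h⁻)}², where F_{h̲} = {(x,y) : 0<x<L, 0<y<h̲(x)}. -/

import Mathlib

open MeasureTheory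


lemma aux_cs (F : ℝ → ℝ × ℝ) (hF : Continuous F) (a b : ℝ) (hab : a ≤ b) :
    ‖∫ z in a..b, F z‖ ^ 2 ≤ (b - a) * ∫ z in Set.Ioc a b, ‖F z‖ ^ 2 := by
  have hba : (0:ℝ) ≤ b - a := sub_nonneg.2 hab
  have hμ : IsFiniteMeasure (volume.restrict (Set.Ioc a b)) :=
    ⟨by rw [Measure.restrict_apply_univ, Real.volume_Ioc]; exact ENNReal.ofReal_lt_top⟩
  have hconj : (2:ℝ).HolderConjugate 2 := Real.HolderConjugate.two_two
  have hFc : Continuous fun z => ‖F z‖ := hF.norm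
  have hmem : MemLp (fun z => ‖F z‖) (ENNReal.ofReal 2) (volume.restrict (Set.Ioc a b)) := by
    rw [show ENNReal.ofReal 2 = 2 by norm_num]
    refine (memLp_two_iff_integrable_sq hFc.aestronglyMeasurable).2 ?_
    exact (hFc.pow 2).integrableOn_Ioc
  have hone : MemLp (fun _ : ℝ => (1:ℝ)) (ENNReal.ofReal 2) (volume.restrict (Set.Ioc a b)) :=
    memLp_const 1
  have hH := integral_mul_le_Lp_mul_Lq_of_nonneg hconj
      (Filter.Eventually.of_forall fun z => norm_nonneg _)
      (Filter.Eventually.of_forall fun _ => zero_le_one) hmem hone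
  simp only [mul_one, Real.one_rpow] at hH
  have hA : (0:ℝ) ≤ ∫ z in Set.Ioc a b, ‖F z‖ ^ 2 := integral_nonneg fun z => by positivity
  have hrpow2 : ∀ z : ℝ, ‖F z‖ ^ (2:ℝ) = ‖F z‖ ^ 2 := fun z => by
    rw [show (2:ℝ) = ((2:ℕ):ℝ) by norm_num, Real.rpow_natCast]
  simp only [hrpow2] at hH
  have h1int : ∫ _z in Set.Ioc a b, (1:ℝ) = b - a := by
    rw [setIntegral_const, measureReal_def, Real.volume_Ioc, smul_eq_mul, mul_one,
      ENNReal.toReal_ofReal hba]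
  rw [h1int] at hH
  have hsq : ∀ x : ℝ, 0 ≤ x → (x ^ ((1:ℝ)/2)) ^ 2 = x := fun x hx => by
    rw [← Real.rpow_natCast (x ^ ((1:ℝ)/2)) 2, ← Real.rpow_mul hx]
    norm_num
  have hnorm : ‖∫ z in a..b, F z‖ ≤ ∫ z in Set.Ioc a b, ‖F z‖ := by
    rw [← intervalIntegral.integral_of_le hab]
    exact intervalIntegral.norm_integral_le_integral_norm hab
  calc ‖∫ z in a..b, F z‖ ^ 2 ≤ ((∫ z in Set.Ioc a b, ‖F z‖ ^ 2) ^ ((1:ℝ)/2) * (b - a) ^ ((1:ℝ)/2)) ^ 2 := by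
        apply pow_le_pow_left₀ (norm_nonneg _) (hnorm.trans hH)
    _ = (b - a) * ∫ z in Set.Ioc a b, ‖F z‖ ^ 2 := by
        rw [mul_pow, hsq _ hA, hsq _ hba]; ring


lemma aux_mono {μ : Measure (ℝ × ℝ)} {S T Z : Set (ℝ × ℝ)} (hT : MeasurableSet T)
    (hST : S ⊆ T) (hZ : μ Z = 0)
    (hinter : ∀ D : Set (ℝ × ℝ), MeasurableSet D → μ (T ∩ D) = μ (S ∩ D))
    {f g : ℝ × ℝ → ℝ} (hf : Integrable f (μ.restrict T)) (hg : Integrable g (μ.restrict T))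
    (hfg : ∀ p ∈ S \ Z, f p ≤ g p) :
    ∫ p, f p ∂μ.restrict T ≤ ∫ p, g p ∂μ.restrict T := by
  set f₁ := hf.1.mk f with hf1
  set g₁ := hg.1.mk g with hg1
  have hZ' : μ.restrict T Z = 0 :=
    le_antisymm (le_trans (Measure.restrict_apply_le T Z) hZ.le) zero_le
  set N := toMeasurable (μ.restrict T) ({p | f p ≠ f₁ p} ∪ {p | g p ≠ g₁ p} ∪ Z) with hN
  have hNnull : μ.restrict T N = 0 := by
    rw [hN, measure_toMeasurable]
    refine measure_union_null (measure_union_null ?_ ?_) hZ'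
    · exact hf.1.ae_eq_mk
    · exact hg.1.ae_eq_mk
  have hD : MeasurableSet {p | g₁ p < f₁ p} :=
    measurableSet_lt hg.1.stronglyMeasurable_mk.measurable hf.1.stronglyMeasurable_mk.measurable
  have hSD : S ∩ {p | g₁ p < f₁ p} ⊆ N := by
    rintro p ⟨hpS, hpD⟩
    by_contra hpN
    have h1 : f p = f₁ p := by
      by_contra hc; exact hpN (subset_toMeasurable _ _ (Or.inl (Or.inl hc)))
    have h2 : g p = g₁ p := by
      by_contra hc; exact hpN (subset_toMeasurable _ _ (Or.inl (Or.inr hc)))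
    have h3 : p ∉ Z := fun hc => hpN (subset_toMeasurable _ _ (Or.inr hc))
    have hle := hfg p ⟨hpS, h3⟩
    rw [h1, h2] at hle
    exact absurd hpD (not_lt.2 hle)
  have hDnull : μ.restrict T {p | g₁ p < f₁ p} = 0 := by
    rw [Measure.restrict_apply hD]
    have e1 : μ ({p | g₁ p < f₁ p} ∩ T) = μ (S ∩ {p | g₁ p < f₁ p}) := by
      rw [Set.inter_comm]; exact hinter _ hD
    have e2 : μ (S ∩ {p | g₁ p < f₁ p}) ≤ μ (N ∩ T) := by
      apply measure_mono
      exact Set.subset_inter hSD (fun p hp => hST hp.1)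
    have e3 : μ (N ∩ T) = 0 := by
      rw [← Measure.restrict_apply (measurableSet_toMeasurable _ _)]
      exact hNnull
    exact le_antisymm (e1 ▸ (e2.trans e3.le)) zero_le
  have hle : f₁ ≤ᵐ[μ.restrict T] g₁ := by
    refine (ae_iff).2 ?_
    simpa only [not_le] using hDnull
  calc ∫ p, f p ∂μ.restrict T = ∫ p, f₁ p ∂μ.restrict T := integral_congr_ae hf.1.ae_eq_mk
    _ ≤ ∫ p, g₁ p ∂μ.restrict T :=
        integral_mono_ae (hf.congr hf.1.ae_eq_mk) (hg.congr hg.1.ae_eq_mk) hle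
    _ = ∫ p, g p ∂μ.restrict T := (integral_congr_ae hg.1.ae_eq_mk).symm

/-- Estimate of the vertical-translation difference `w(x, m(x)(y+1)-1) - w(x,y)` on
`F_{h̲}`, in terms of `‖m-1‖_∞`, `‖h̲‖_∞` and the vertical derivative of `w` on `F_h⁻`. -/
theorem stmt13 (L M Km Kb : ℝ) (hL : 0 < L) (hM : 0 < M) (hKm : 0 ≤ Km) (hKb : 0 ≤ Kb)
    (h hb : ℝ → ℝ)
    (hreg : ∀ x ∈ Set.Ioo (0:ℝ) L, 0 ≤ hb x ∧ hb x ≤ h x ∧ h x ≤ M)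
    (hKmb : ∀ x ∈ Set.Ioo (0:ℝ) L, |(h x + 1)/(hb x + 1) - 1| ≤ Km)
    (hKbb : ∀ x ∈ Set.Ioo (0:ℝ) L, hb x ≤ Kb)
    (w wy : ℝ × ℝ → ℝ × ℝ)
    (hw : Continuous w) (hwy : Continuous wy)
    (hderiv : ∀ x ∈ Set.Ioo (0:ℝ) L, ∀ y : ℝ, HasDerivAt (fun z => w (x, z)) (wy (x, y)) y)
    (hint : IntegrableOn (fun p => ‖wy p‖^2)
      {p : ℝ × ℝ | p.1 ∈ Set.Ioo (0:ℝ) L ∧ p.2 ∈ Set.Ioo (-1) (h p.1)}) :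
    (∫ p in {p : ℝ × ℝ | p.1 ∈ Set.Ioo (0:ℝ) L ∧ p.2 ∈ Set.Ioo 0 (hb p.1)},
        ‖w (p.1, ((h p.1 + 1)/(hb p.1 + 1)) * (p.2 + 1) - 1) - w p‖^2) ≤
      (M + 1) * Km * Kb *
        ∫ p in {p : ℝ × ℝ | p.1 ∈ Set.Ioo (0:ℝ) L ∧ p.2 ∈ Set.Ioo (-1) (h p.1)},
          ‖wy p‖^2 := by
  classical
  set S : Set (ℝ × ℝ) := {p : ℝ × ℝ | p.1 ∈ Set.Ioo (0:ℝ) L ∧ p.2 ∈ Set.Ioo 0 (hb p.1)}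
    with hSdef
  set B : Set (ℝ × ℝ) := {p : ℝ × ℝ | p.1 ∈ Set.Ioo (0:ℝ) L ∧ p.2 ∈ Set.Ioo (-1) (h p.1)}
    with hBdef
  set box1 : Set (ℝ × ℝ) := (Set.Ioo (0:ℝ) L) ×ˢ (Set.Ioo (0:ℝ) Kb) with hbox1def
  set box2 : Set (ℝ × ℝ) := (Set.Ioo (0:ℝ) L) ×ˢ (Set.Ioo (-1:ℝ) M) with hbox2def
  have hbox1 : MeasurableSet box1 := measurableSet_Ioo.prod measurableSet_Ioo
  have hbox2 : MeasurableSet box2 := measurableSet_Ioo.prod measurableSet_Ioo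
  have hSbox : S ⊆ box1 := fun p hp => ⟨hp.1, hp.2.1, lt_of_lt_of_le hp.2.2 (hKbb _ hp.1)⟩
  have hBbox : B ⊆ box2 := fun p hp => ⟨hp.1, hp.2.1, lt_of_lt_of_le hp.2.2 (hreg _ hp.1).2.2⟩
  set T : Set (ℝ × ℝ) := toMeasurable volume S ∩ box1 with hTdef
  set C : Set (ℝ × ℝ) := toMeasurable volume B ∩ box2 with hCdef
  have hT : MeasurableSet T := (measurableSet_toMeasurable _ _).inter hbox1
  have hC : MeasurableSet C := (measurableSet_toMeasurable _ _).inter hbox2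
  have hST : S ⊆ T := Set.subset_inter (subset_toMeasurable _ _) hSbox
  have hBC : B ⊆ C := Set.subset_inter (subset_toMeasurable _ _) hBbox
  have resS : volume.restrict S = volume.restrict T := by
    refine le_antisymm (Measure.restrict_mono hST le_rfl) ?_
    calc volume.restrict T ≤ volume.restrict (toMeasurable volume S) :=
          Measure.restrict_mono Set.inter_subset_left le_rfl
      _ = volume.restrict S := Measure.restrict_toMeasurable_of_sFinite _
  have resB : volume.restrict B = volume.restrict C := by
    refine le_antisymm (Measure.restrict_mono hBC le_rfl) ?_
    calc volume.restrict C ≤ volume.restrict (toMeasurable volume B) :=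
          Measure.restrict_mono Set.inter_subset_left le_rfl
      _ = volume.restrict B := Measure.restrict_toMeasurable_of_sFinite _
  have hitS : ∀ D : Set (ℝ × ℝ), MeasurableSet D → volume (T ∩ D) = volume (S ∩ D) := by
    intro D hD
    have e1 : T ∩ D = toMeasurable volume S ∩ (box1 ∩ D) := by rw [hTdef, Set.inter_assoc]
    rw [e1, Measure.measure_toMeasurable_inter_of_sFinite (hbox1.inter hD)]
    congr 1
    ext p
    exact ⟨fun hp => ⟨hp.1, hp.2.2⟩, fun hp => ⟨hp.1, hSbox hp.1, hp.2⟩⟩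
  -- The indicator function of ‖wy‖² on C and its partial integral G
  set F : ℝ × ℝ → ℝ := C.indicator (fun p => ‖wy p‖^2) with hFdef
  have hFsm : StronglyMeasurable F := ((hwy.norm.pow 2).stronglyMeasurable).indicator hC
  have hIC : IntegrableOn (fun p => ‖wy p‖^2) C volume := by
    rw [IntegrableOn, ← resB]; exact hint
  have hIF : Integrable F volume := (integrable_indicator_iff hC).2 hIC
  have hIFp : Integrable F (volume.prod volume) := by rwa [← Measure.volume_eq_prod]
  set G : ℝ → ℝ := fun x => ∫ z, F (x, z) with hGdef
  have hGsm : StronglyMeasurable G := hFsm.integral_prod_right'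
  have hIG : Integrable G volume := hIFp.integral_prod_left
  have hGnn : ∀ x, 0 ≤ G x := fun x =>
    integral_nonneg fun z => Set.indicator_nonneg (fun p _ => by positivity) _
  have hsecmeas : ∀ x : ℝ, MeasurableSet {z : ℝ | (x, z) ∈ C} := fun x =>
    measurable_prodMk_left hC
  have hFsec : ∀ x : ℝ, (fun z => F (x, z))
      = Set.indicator {z : ℝ | (x, z) ∈ C} (fun z => ‖wy (x, z)‖^2) := by
    intro x; funext z
    by_cases hz : (x, z) ∈ C
    · rw [hFdef, Set.indicator_of_mem hz, Set.indicator_of_mem (show z ∈ {z : ℝ | (x, z) ∈ C} from hz)]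
    · rw [hFdef, Set.indicator_of_notMem hz,
        Set.indicator_of_notMem (show z ∉ {z : ℝ | (x, z) ∈ C} from hz)]
  have hGsec : ∀ x : ℝ, G x = ∫ z in {z : ℝ | (x, z) ∈ C}, ‖wy (x, z)‖^2 := by
    intro x
    rw [hGdef]
    calc (∫ z, F (x, z)) = ∫ z, Set.indicator {z : ℝ | (x, z) ∈ C} (fun z => ‖wy (x, z)‖^2) z := by
          rw [hFsec x]
      _ = _ := integral_indicator (hsecmeas x)
  have hRHSeq : (∫ p in B, ‖wy p‖^2) = ∫ x, G x := by
    rw [show volume.restrict B = volume.restrict C from resB, ← integral_indicator hC]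
    calc (∫ p, F p) = ∫ p, F p ∂(volume.prod volume) := by rw [← Measure.volume_eq_prod]
      _ = ∫ x, ∫ z, F (x, z) := integral_prod F hIFp
  -- the null set of x whose sections are not integrable
  have haes : ∀ᵐ x : ℝ, Integrable (fun z => F (x, z)) volume := hIFp.prod_right_ae
  set bad : Set ℝ := toMeasurable volume {x : ℝ | ¬ Integrable (fun z => F (x, z)) volume}
    with hbaddef
  have hbadnull : volume bad = 0 := by
    rw [hbaddef, measure_toMeasurable]; exact ae_iff.1 haes
  set Z : Set (ℝ × ℝ) := bad ×ˢ (Set.univ : Set ℝ) with hZdef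
  have hZ : volume Z = 0 := by
    rw [hZdef, Measure.volume_eq_prod, Measure.prod_prod, hbadnull, zero_mul]
  -- the two functions to compare
  set f : ℝ × ℝ → ℝ :=
    fun p => ‖w (p.1, ((h p.1 + 1)/(hb p.1 + 1)) * (p.2 + 1) - 1) - w p‖^2 with hfdef
  set g : ℝ × ℝ → ℝ := fun p => ((M + 1) * Km) * G p.1 with hgdef
  -- the pointwise bound on S \ Z
  have key : ∀ p ∈ S \ Z, f p ≤ g p := by
    rintro ⟨x, y⟩ ⟨⟨hx, hy⟩, hpz⟩
    obtain ⟨hb0, hbh, hhM⟩ := hreg x hx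
    have hbp1 : (0:ℝ) < hb x + 1 := by linarith
    have hxbad : x ∉ bad := fun hc => hpz ⟨hc, Set.mem_univ _⟩
    have hxint : Integrable (fun z => F (x, z)) volume := by
      by_contra hcon
      exact hxbad (subset_toMeasurable _ _ hcon)
    have hsecInt : IntegrableOn (fun z => ‖wy (x, z)‖^2) {z : ℝ | (x, z) ∈ C} volume := by
      rw [hFsec x] at hxint
      exact (integrable_indicator_iff (hsecmeas x)).1 hxint
    set m : ℝ := (h x + 1) / (hb x + 1) with hmdef
    have hcancel : m * (hb x + 1) = h x + 1 := div_mul_cancel₀ _ (ne_of_gt hbp1)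
    have hm1 : 1 ≤ m := by rw [hmdef, le_div_iff₀ hbp1]; linarith
    have hmK : m - 1 ≤ Km := (abs_le.1 (hKmb x hx)).2
    have hy0 : (0:ℝ) < y := hy.1
    have hyb : y < hb x := hy.2
    set b : ℝ := m * (y + 1) - 1 with hbdef
    have hyble : y ≤ b := by nlinarith
    have hbh' : b < h x := by nlinarith
    have hlen : b - y ≤ (M + 1) * Km := by nlinarith
    have hsub2 : Set.Ioc y b ⊆ {z : ℝ | (x, z) ∈ C} := by
      intro z hz
      have hzB : (x, z) ∈ B := ⟨hx, by constructor <;> simp <;> [linarith [hz.1]; linarith [hz.2]]⟩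
      exact hBC hzB
    have hcont : Continuous fun z => wy (x, z) := hwy.comp (continuous_const.prodMk continuous_id)
    have hFTC : ∫ z in y..b, wy (x, z) = w (x, b) - w (x, y) :=
      intervalIntegral.integral_eq_sub_of_hasDerivAt (fun z _ => hderiv x hx z)
        (hcont.intervalIntegrable y b)
    have hCS := aux_cs (fun z => wy (x, z)) hcont y b hyble
    rw [hFTC] at hCS
    have hmono : (∫ z in Set.Ioc y b, ‖wy (x, z)‖^2) ≤ G x := by
      rw [hGsec x]
      exact setIntegral_mono_set hsecInt (Filter.Eventually.of_forall fun z => by positivity)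
        (HasSubset.Subset.eventuallyLE hsub2)
    have hnn : (0:ℝ) ≤ ∫ z in Set.Ioc y b, ‖wy (x, z)‖^2 := integral_nonneg fun z => by positivity
    calc f (x, y) = ‖w (x, b) - w (x, y)‖^2 := rfl
      _ ≤ (b - y) * ∫ z in Set.Ioc y b, ‖wy (x, z)‖^2 := hCS
      _ ≤ ((M + 1) * Km) * G x := mul_le_mul hlen hmono hnn (by positivity)
      _ = g (x, y) := rfl
  -- now the integral estimates
  have hRHSnn : (0:ℝ) ≤ (M + 1) * Km * Kb * ∫ p in B, ‖wy p‖^2 := by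
    apply mul_nonneg (by positivity)
    exact integral_nonneg fun p => by positivity
  rw [show volume.restrict S = volume.restrict T from resS]
  by_cases hfi : Integrable f (volume.restrict T)
  · -- integrability of g on T
    have hq : Integrable (T.indicator fun p : ℝ × ℝ => G p.1) volume := by
      have hqsm : StronglyMeasurable (T.indicator fun p : ℝ × ℝ => G p.1) :=
        (hGsm.comp_measurable measurable_fst).indicator hT
      have hone : Integrable (Set.indicator (Set.Ioo (0:ℝ) Kb) fun _ => (1:ℝ)) volume := by
        refine (integrable_indicator_iff measurableSet_Ioo).2 ?_
        exact integrableOn_const (by rw [Real.volume_Ioo]; exact ENNReal.ofReal_ne_top)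
      have hbig : Integrable (fun p : ℝ × ℝ =>
          (Set.indicator (Set.Ioo (0:ℝ) L) (fun x => |G x|) p.1)
            * (Set.indicator (Set.Ioo (0:ℝ) Kb) (fun _ => (1:ℝ)) p.2)) volume := by
        rw [Measure.volume_eq_prod]
        exact Integrable.mul_prod (hIG.abs.indicator measurableSet_Ioo) hone
      refine hbig.mono' hqsm.aestronglyMeasurable (Filter.Eventually.of_forall fun p => ?_)
      by_cases hp : p ∈ T
      · rw [Set.indicator_of_mem hp]
        have hp1 : p.1 ∈ Set.Ioo (0:ℝ) L := hp.2.1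
        have hp2 : p.2 ∈ Set.Ioo (0:ℝ) Kb := hp.2.2
        rw [Set.indicator_of_mem hp1, Set.indicator_of_mem hp2, mul_one, Real.norm_eq_abs]
      · rw [Set.indicator_of_notMem hp, norm_zero]
        exact mul_nonneg (Set.indicator_nonneg (fun _ _ => abs_nonneg _) _)
          (Set.indicator_nonneg (fun _ _ => zero_le_one) _)
    have hgi : Integrable g (volume.restrict T) :=
      ((integrable_indicator_iff hT).1 hq).const_mul _
    refine le_trans (aux_mono hT hST hZ hitS hfi hgi key) ?_
    -- ∫ g over T ≤ RHS
    have hqprod : Integrable (T.indicator fun p : ℝ × ℝ => G p.1) (volume.prod volume) := by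
      rwa [← Measure.volume_eq_prod]
    have hsecT : ∀ x : ℝ, MeasurableSet {y : ℝ | (x, y) ∈ T} := fun x =>
      measurable_prodMk_left hT
    have hinner : ∀ x : ℝ, (∫ y, T.indicator (fun p : ℝ × ℝ => G p.1) (x, y)) ≤ Kb * G x := by
      intro x
      have e : (fun y => T.indicator (fun p : ℝ × ℝ => G p.1) (x, y))
          = Set.indicator {y : ℝ | (x, y) ∈ T} (fun _ => G x) := by
        funext y
        by_cases hy : (x, y) ∈ T
        · rw [Set.indicator_of_mem hy, Set.indicator_of_mem (show y ∈ {y : ℝ | (x, y) ∈ T} from hy)]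
        · rw [Set.indicator_of_notMem hy,
            Set.indicator_of_notMem (show y ∉ {y : ℝ | (x, y) ∈ T} from hy)]
      rw [e, integral_indicator (hsecT x), setIntegral_const, smul_eq_mul]
      have hsub : {y : ℝ | (x, y) ∈ T} ⊆ Set.Ioo (0:ℝ) Kb := fun y hy => hy.2.2
      have hv : (volume {y : ℝ | (x, y) ∈ T}).toReal ≤ Kb := by
        apply ENNReal.toReal_le_of_le_ofReal hKb
        calc volume {y : ℝ | (x, y) ∈ T} ≤ volume (Set.Ioo (0:ℝ) Kb) := measure_mono hsub
          _ = ENNReal.ofReal Kb := by rw [Real.volume_Ioo, sub_zero]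
      exact mul_le_mul_of_nonneg_right hv (hGnn x)
    have hTint : (∫ p in T, G p.1) ≤ Kb * ∫ x, G x := by
      rw [← integral_indicator hT]
      calc (∫ p, T.indicator (fun p : ℝ × ℝ => G p.1) p)
          = ∫ p, T.indicator (fun p : ℝ × ℝ => G p.1) p ∂(volume.prod volume) := by
            rw [← Measure.volume_eq_prod]
        _ = ∫ x, ∫ y, T.indicator (fun p : ℝ × ℝ => G p.1) (x, y) :=
            integral_prod _ hqprod
        _ ≤ ∫ x, Kb * G x :=
            integral_mono hqprod.integral_prod_left (hIG.const_mul Kb) hinner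
        _ = Kb * ∫ x, G x := integral_const_mul _ _
    calc (∫ p, g p ∂volume.restrict T) = ((M + 1) * Km) * ∫ p in T, G p.1 :=
          integral_const_mul _ _
      _ ≤ ((M + 1) * Km) * (Kb * ∫ x, G x) :=
          mul_le_mul_of_nonneg_left hTint (by positivity)
      _ = (M + 1) * Km * Kb * ∫ x, G x := by ring
      _ = (M + 1) * Km * Kb * ∫ p in B, ‖wy p‖^2 := by rw [hRHSeq]
  · rw [integral_undef hfi]
    exact hRHSnn
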